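/- Suppose X ∈ ℝ^{d_in×n} has no two identical columns, no zero columns, and satisfies n > rank(X). Then there exists a nonzero vector w ∈ ℝ^n with Xw = 0 such that X·diag(w)·Xᵀ ≠ 0. -/

import Mathlib

open scoped BigOperators

namespace CoLA

noncomputable section

/-- Frobenius norm of a real matrix. -/
def frobNorm {m n : ℕ} (M : Matrix (Fin m) (Fin n) ℝ) : ℝ :=
  Real.sqrt (∑ i, ∑ j, (M i j) ^ 2)

/-- Entrywise application of `σ` to a matrix. -/
def entrywise (σ : ℝ → ℝ) {m n : ℕ} (M : Matrix (Fin m) (Fin n) ℝ) :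
    Matrix (Fin m) (Fin n) ℝ :=
  Matrix.of fun i j => σ (M i j)

/-- `E_σ(r)`. -/
def Esig (σ : ℝ → ℝ) {din dout n : ℕ} (X : Matrix (Fin din) (Fin n) ℝ)
    (Y : Matrix (Fin dout) (Fin n) ℝ) (r : ℕ) : ℝ :=
  ⨅ (A : Matrix (Fin r) (Fin din) ℝ), ⨅ (B : Matrix (Fin dout) (Fin r) ℝ),
    frobNorm (Y - B * entrywise σ (A * X))

/-- `E_id(r)`. -/
def Eid {din dout n : ℕ} (X : Matrix (Fin din) (Fin n) ℝ)
    (Y : Matrix (Fin dout) (Fin n) ℝ) (r : ℕ) : ℝ :=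
  ⨅ (A : Matrix (Fin r) (Fin din) ℝ), ⨅ (B : Matrix (Fin dout) (Fin r) ℝ),
    frobNorm (Y - B * A * X)

/-- The (unsorted) singular values of `M`: square roots of eigenvalues of `Mᴴ * M`. -/
def svAux {m n : ℕ} (M : Matrix (Fin m) (Fin n) ℝ) : Fin n → ℝ :=
  fun i => Real.sqrt (((Matrix.isHermitian_conjTranspose_mul_self M : (M.transpose * M).IsHermitian)).eigenvalues i)

/-- Singular values of `M` sorted in non-increasing order (0-indexed). -/
def sv {m n : ℕ} (M : Matrix (Fin m) (Fin n) ℝ) : Fin n → ℝ :=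
  fun i => svAux M (Tuple.sort (fun j => -(svAux M j)) i)

/-- `k`-th largest singular value (1-indexed, `0` for `k > n`). -/
def sVal {m n : ℕ} (M : Matrix (Fin m) (Fin n) ℝ) (k : ℕ) : ℝ :=
  if h : k - 1 < n then sv M ⟨k - 1, h⟩ else 0

/-- `s_{>k}(M) = √(∑_{j>k} s_j(M)²)` (with `j` 1-indexed). -/
def sGt {m n : ℕ} (M : Matrix (Fin m) (Fin n) ℝ) (k : ℕ) : ℝ :=
  Real.sqrt (∑ j : Fin n, if k ≤ (j : ℕ) then (sv M j) ^ 2 else 0)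

/-- Spectral (ℓ²-operator) norm of a real matrix. -/
def specNorm {m n : ℕ} (M : Matrix (Fin m) (Fin n) ℝ) : ℝ :=
  ‖LinearMap.toContinuousLinearMap (Matrix.toEuclideanLin M)‖

/-- Effective rank `r_α(M)`: the least `k` with `∑_{i≤k} s_i² ≥ α ∑_i s_i²`. -/
def effRank {m n : ℕ} (M : Matrix (Fin m) (Fin n) ℝ) (α : ℝ) : ℕ :=
  sInf {k : ℕ |
    α * ∑ i : Fin n, (sv M i) ^ 2 ≤ ∑ i : Fin n, if (i : ℕ) < k then (sv M i) ^ 2 else 0}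

/-- Row space of `X` inside `Fin n → ℝ`. -/
def rowSpace {d n : ℕ} (X : Matrix (Fin d) (Fin n) ℝ) : Submodule ℝ (Fin n → ℝ) :=
  Submodule.span ℝ (Set.range X)

/-- Row space of `X` as a submodule of Euclidean space. -/
def rowSpaceE {d n : ℕ} (X : Matrix (Fin d) (Fin n) ℝ) :
    Submodule ℝ (EuclideanSpace ℝ (Fin n)) :=
  Submodule.span ℝ (Set.range fun i => (WithLp.equiv 2 (Fin n → ℝ)).symm (X i))

/-- Row-wise orthogonal projection of the rows of `Y` onto the subspace `S`. -/
def projRows {dout n : ℕ} (S : Submodule ℝ (EuclideanSpace ℝ (Fin n)))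
    (Y : Matrix (Fin dout) (Fin n) ℝ) : Matrix (Fin dout) (Fin n) ℝ :=
  Matrix.of fun i => WithLp.equiv 2 (Fin n → ℝ)
    ((S.orthogonalProjectionOnto ((WithLp.equiv 2 (Fin n → ℝ)).symm (Y i)) :
      EuclideanSpace ℝ (Fin n)))

/-- Row-wise orthogonal projection onto the orthogonal complement of `span{v}`. -/
def projVperp {dout n : ℕ} (v : Fin n → ℝ) (Y : Matrix (Fin dout) (Fin n) ℝ) :
    Matrix (Fin dout) (Fin n) ℝ :=
  projRows (Submodule.span ℝ {(WithLp.equiv 2 (Fin n → ℝ)).symm v})ᗮ Y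

/-- Auxiliary: linear independence of coordinate functionals on a
multiplication-closed subspace (Artin-style independence of characters). -/
private lemma aux_indep {n : ℕ} (R : Submodule ℝ (Fin n → ℝ))
    (hmul : ∀ v ∈ R, ∀ u ∈ R, v * u ∈ R)
    (hsep : ∀ j k : Fin n, j ≠ k → ∃ v ∈ R, v j ≠ v k)
    (hnz : ∀ j : Fin n, ∃ v ∈ R, v j ≠ 0)
    (s : Finset (Fin n)) :
    ∀ c : Fin n → ℝ, (∀ v ∈ R, ∑ j ∈ s, c j * v j = 0) → ∀ j ∈ s, c j = 0 := by
  induction s using Finset.strongInduction with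
  | _ s ih =>
    intro c H j hj
    have key : ∀ k ∈ s.erase j, c k = 0 := by
      intro k hk
      obtain ⟨v, hv, hvk⟩ := hsep k j (Finset.ne_of_mem_erase hk)
      have H' : ∀ u ∈ R, ∑ l ∈ s.erase j, (c l * (v l - v j)) * u l = 0 := by
        intro u hu
        have e1 : ∑ l ∈ s, c l * (v l * u l) = 0 := by
          have := H (v * u) (hmul v hv u hu)
          simpa [Pi.mul_apply] using this
        have e2 : ∑ l ∈ s, c l * u l = 0 := H u hu
        have e3 : ∑ l ∈ s, (c l * (v l - v j)) * u l = 0 := by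
          have : ∑ l ∈ s, (c l * (v l - v j)) * u l
              = (∑ l ∈ s, c l * (v l * u l)) - v j * ∑ l ∈ s, c l * u l := by
            rw [Finset.mul_sum, ← Finset.sum_sub_distrib]
            exact Finset.sum_congr rfl (fun l _ => by ring)
          rw [this, e1, e2]; ring
        have hz : (c j * (v j - v j)) * u j = 0 := by ring
        rw [Finset.sum_erase s hz]
        exact e3
      have := ih (s.erase j) (Finset.erase_ssubset hj) _ H' k hk
      rcases mul_eq_zero.mp this with h | h
      · exact h
      · exact absurd (sub_eq_zero.mp h) hvk
    obtain ⟨u, hu, huj⟩ := hnz j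
    have := H u hu
    rw [← Finset.add_sum_erase s _ hj] at this
    rw [Finset.sum_eq_zero (fun k hk => by rw [key k hk, zero_mul])] at this
    have : c j * u j = 0 := by linarith
    rcases mul_eq_zero.mp this with h | h
    · exact h
    · exact absurd h huj

/-- Auxiliary: the dimension of a multiplication-closed subspace of `ℝ^n`
that separates coordinates and vanishes at no coordinate is at least `n`. -/
private lemma aux_dim {n : ℕ} (R : Submodule ℝ (Fin n → ℝ))
    (hmul : ∀ v ∈ R, ∀ u ∈ R, v * u ∈ R)
    (hsep : ∀ j k : Fin n, j ≠ k → ∃ v ∈ R, v j ≠ v k)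
    (hnz : ∀ j : Fin n, ∃ v ∈ R, v j ≠ 0) :
    n ≤ Module.finrank ℝ R := by
  have hli : LinearIndependent ℝ
      (fun j : Fin n => ((LinearMap.proj j).comp R.subtype : Module.Dual ℝ R)) := by
    rw [Fintype.linearIndependent_iff]
    intro g hg j
    refine aux_indep R hmul hsep hnz Finset.univ g ?_ j (Finset.mem_univ j)
    intro v hv
    have := DFunLike.congr_fun hg (⟨v, hv⟩ : R)
    simpa [LinearMap.sum_apply] using this
  have h1 := hli.fintype_card_le_finrank
  rwa [Fintype.card_fin, Subspace.dual_finrank_eq] at h1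

/-- Lemma 1: if `X` has no two identical columns, no zero columns
and `rank X < n`, then there is a nonzero `w ∈ ker(X)` with `X diag(w) Xᵀ ≠ 0`. -/
theorem stmt5 {din n : ℕ} (X : Matrix (Fin din) (Fin n) ℝ)
    (hcols : ∀ j k : Fin n, j ≠ k → (fun i => X i j) ≠ (fun i => X i k))
    (hnz : ∀ j : Fin n, (fun i => X i j) ≠ 0)
    (hrank : X.rank < n) :
    ∃ w : Fin n → ℝ, w ≠ 0 ∧ X.mulVec w = 0 ∧
      X * Matrix.diagonal w * X.transpose ≠ 0 := by
  by_contra hcon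
  push_neg at hcon
  have hall : ∀ w : Fin n → ℝ, X.mulVec w = 0 → X * Matrix.diagonal w * X.transpose = 0 := by
    intro w hw
    by_cases h0 : w = 0
    · subst h0
      rw [show (0 : Fin n → ℝ) = fun _ => 0 from rfl, Matrix.diagonal_zero, Matrix.mul_zero,
        Matrix.zero_mul]
    · exact hcon w h0 hw
  have hkey : ∀ a b : Fin din, (X a * X b) ∈ Submodule.span ℝ (Set.range X) := by
    intro a b
    have hmem : (WithLp.equiv 2 (Fin n → ℝ)).symm (X a * X b) ∈ rowSpaceE X := by
      rw [← Submodule.orthogonal_orthogonal (rowSpaceE X)]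
      rw [Submodule.mem_orthogonal]
      intro w hw
      have hker : X.mulVec (WithLp.equiv 2 (Fin n → ℝ) w) = 0 := by
        funext a'
        have h1 : (WithLp.equiv 2 (Fin n → ℝ)).symm (X a') ∈ rowSpaceE X :=
          Submodule.subset_span ⟨a', rfl⟩
        have h2 := hw _ h1
        simpa [Matrix.mulVec, dotProduct, mul_comm, PiLp.inner_apply, RCLike.inner_apply,
          conj_trivial] using h2
      have hentry := congrFun (congrFun (hall _ hker) a) b
      rw [Matrix.mul_apply] at hentry
      simp only [Matrix.mul_diagonal, Matrix.transpose_apply, Matrix.zero_apply] at hentry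
      simp only [real_inner_comm w, PiLp.inner_apply, RCLike.inner_apply, conj_trivial]
      rw [← hentry]
      refine Finset.sum_congr rfl (fun j _ => ?_)
      show X a j * X b j * w.ofLp j = X a j * w.ofLp j * X b j
      ring
    have hRmap : Submodule.span ℝ (Set.range X)
        = (rowSpaceE X).map ((WithLp.linearEquiv 2 ℝ (Fin n → ℝ) : EuclideanSpace ℝ (Fin n) ≃ₗ[ℝ] (Fin n → ℝ)) : EuclideanSpace ℝ (Fin n) →ₗ[ℝ] (Fin n → ℝ)) := by
      rw [rowSpaceE, Submodule.map_span]
      congr 1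
      have hc : (⇑(WithLp.linearEquiv 2 ℝ (Fin n → ℝ)) ∘
          fun i => (WithLp.equiv 2 (Fin n → ℝ)).symm (X i)) = X :=
        funext fun i => by simp [WithLp.linearEquiv_apply]
      rw [← Set.range_comp]; exact congrArg Set.range hc.symm
    rw [hRmap]
    exact Submodule.mem_map.mpr ⟨_, hmem, by simp⟩
  have hrows : ∀ i, X i ∈ Submodule.span ℝ (Set.range X) :=
    fun i => Submodule.subset_span ⟨i, rfl⟩
  have hmul1 : ∀ a : Fin din, ∀ u ∈ Submodule.span ℝ (Set.range X),
      X a * u ∈ Submodule.span ℝ (Set.range X) := by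
    intro a u hu
    induction hu using Submodule.span_induction with
    | mem x hx => obtain ⟨b, rfl⟩ := hx; exact hkey a b
    | zero => simpa using Submodule.zero_mem _
    | add x y hx hy ihx ihy => rw [mul_add]; exact Submodule.add_mem _ ihx ihy
    | smul c x hx ih => rw [mul_smul_comm]; exact Submodule.smul_mem _ c ih
  have hmul : ∀ v ∈ Submodule.span ℝ (Set.range X), ∀ u ∈ Submodule.span ℝ (Set.range X),
      v * u ∈ Submodule.span ℝ (Set.range X) := by
    intro v hv u hu
    induction hv using Submodule.span_induction with
    | mem x hx => obtain ⟨a, rfl⟩ := hx; exact hmul1 a u hu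
    | zero => simpa using Submodule.zero_mem _
    | add x y hx hy ihx ihy => rw [add_mul]; exact Submodule.add_mem _ ihx ihy
    | smul c x hx ih => rw [smul_mul_assoc]; exact Submodule.smul_mem _ c ih
  have hsep : ∀ j k : Fin n, j ≠ k → ∃ v ∈ Submodule.span ℝ (Set.range X), v j ≠ v k := by
    intro j k hjk
    obtain ⟨i, hi⟩ := Function.ne_iff.mp (hcols j k hjk)
    exact ⟨X i, hrows i, hi⟩
  have hnz' : ∀ j : Fin n, ∃ v ∈ Submodule.span ℝ (Set.range X), v j ≠ 0 := by
    intro j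
    obtain ⟨i, hi⟩ := Function.ne_iff.mp (hnz j)
    exact ⟨X i, hrows i, hi⟩
  have hdim := aux_dim _ hmul hsep hnz'
  rw [show Set.range X = Set.range X.row from rfl, ← Matrix.rank_eq_finrank_span_row] at hdim
  omega


end

end CoLA
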